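/- Let h be C², b > 0, and suppose φ, u_o satisfy the stochastic ZCBF inequality L_f h + L_g h·(u_o + φ) + L^I_σ(h) ≥ b H_σ(h) at a point x. Then B_b(x) = e^{−bh(x)} satisfies L_f B_b + L_g B_b·(u_o + φ) + L^I_σ(B_b) ≤ 0 at x. -/

import Mathlib

open Real Matrix

/-- Gradient of a scalar field on `ℝⁿ` as a vector of partial derivatives. -/
noncomputable def gradVec {n : ℕ} (y : (Fin n → ℝ) → ℝ) (x : Fin n → ℝ) : Fin n → ℝ :=
  fun i => fderiv ℝ y x (Pi.single i 1)

/-- Hessian of a scalar field on `ℝⁿ`. -/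
noncomputable def hessMat {n : ℕ} (y : (Fin n → ℝ) → ℝ) (x : Fin n → ℝ) :
    Matrix (Fin n) (Fin n) ℝ :=
  Matrix.of fun i j => fderiv ℝ (fun z => fderiv ℝ y z (Pi.single j 1)) x (Pi.single i 1)

/-- Itô correction term `L^I_σ(y)(x) = ½ tr[σ(x)σ(x)ᵀ Hess y(x)]`. -/
noncomputable def LIσ {n d : ℕ} (σ : (Fin n → ℝ) → Matrix (Fin n) (Fin d) ℝ)
    (y : (Fin n → ℝ) → ℝ) (x : Fin n → ℝ) : ℝ :=
  (1 / 2) * (σ x * (σ x)ᵀ * hessMat y x).trace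

/-- Quadratic variation term `H_σ(h)(x) = ½ (∇h σ)(∇h σ)ᵀ`. -/
noncomputable def Hσ {n d : ℕ} (σ : (Fin n → ℝ) → Matrix (Fin n) (Fin d) ℝ)
    (h : (Fin n → ℝ) → ℝ) (x : Fin n → ℝ) : ℝ :=
  (1 / 2) * ((gradVec h x) ᵥ* (σ x)) ⬝ᵥ ((gradVec h x) ᵥ* (σ x))


theorem zcbf_to_supermartingale_generator {n m d : ℕ}
    (h : (Fin n → ℝ) → ℝ) (hh : ContDiff ℝ 2 h) (b : ℝ) (hb : 0 < b)
    (f : (Fin n → ℝ) → (Fin n → ℝ))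
    (g : (Fin n → ℝ) → Matrix (Fin n) (Fin m) ℝ)
    (σ : (Fin n → ℝ) → Matrix (Fin n) (Fin d) ℝ)
    (uo φ : (Fin n → ℝ) → (Fin m → ℝ)) (x : Fin n → ℝ)
    (hzcbf : (fderiv ℝ h x) (f x + (g x) *ᵥ (uo x + φ x)) + LIσ σ h x ≥ b * Hσ σ h x) :
    (fderiv ℝ (fun z => exp (-b * h z)) x) (f x + (g x) *ᵥ (uo x + φ x))
      + LIσ σ (fun z => exp (-b * h z)) x ≤ 0 := by
  classical
  set E := Real.exp (-b * h x) with hEdef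
  have hEpos : 0 < E := Real.exp_pos _
  have hdiff : Differentiable ℝ h := hh.differentiable (by norm_num)
  -- derivative of B = exp(-b h)
  have hB' : ∀ z, HasFDerivAt (fun w => Real.exp (-b * h w))
      ((Real.exp (-b * h z) * (-b)) • fderiv ℝ h z) z := by
    intro z
    have h1 : HasFDerivAt (fun w => -b * h w) ((-b) • fderiv ℝ h z) z :=
      ((hdiff z).hasFDerivAt).const_mul (-b)
    have h2 := h1.exp
    rwa [smul_smul] at h2
  have hΦ : Differentiable ℝ (fderiv ℝ h) :=
    (hh.fderiv_right (m := 1) (by norm_num)).differentiable one_ne_zero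
  -- second derivatives of h
  have hφ : ∀ j : Fin n, HasFDerivAt (fun z => fderiv ℝ h z (Pi.single j 1))
      ((ContinuousLinearMap.apply ℝ ℝ ((Pi.single j 1 : Fin n → ℝ))).comp
        (fderiv ℝ (fderiv ℝ h) x)) x := fun j =>
    (ContinuousLinearMap.apply ℝ ℝ ((Pi.single j 1 : Fin n → ℝ))).hasFDerivAt.comp x
      (hΦ x).hasFDerivAt
  have hessH : ∀ i j : Fin n, hessMat h x i j
      = fderiv ℝ (fderiv ℝ h) x (Pi.single i 1) (Pi.single j 1) := by
    intro i j
    simp only [hessMat, Matrix.of_apply]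
    rw [(hφ j).fderiv]
    rfl
  -- Hessian of B
  have hessB : ∀ i j : Fin n, hessMat (fun z => Real.exp (-b * h z)) x i j
      = E * (b ^ 2 * gradVec h x i * gradVec h x j - b * hessMat h x i j) := by
    intro i j
    have heq : (fun z => fderiv ℝ (fun w => Real.exp (-b * h w)) z (Pi.single j 1))
        = fun z => (Real.exp (-b * h z) * (-b)) * (fderiv ℝ h z (Pi.single j 1)) := by
      funext z
      rw [(hB' z).fderiv]
      rfl
    have hF : HasFDerivAt (fun z => Real.exp (-b * h z) * (-b))
        ((-b) • ((E * (-b)) • fderiv ℝ h x)) x := (hB' x).mul_const (-b)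
    have hprod : HasFDerivAt (fun z => (Real.exp (-b * h z) * (-b)) *
        (fderiv ℝ h z (Pi.single j 1))) _ x := hF.mul (hφ j)
    have : hessMat (fun z => Real.exp (-b * h z)) x i j
        = fderiv ℝ (fun z => (Real.exp (-b * h z) * (-b)) *
            (fderiv ℝ h z (Pi.single j 1))) x (Pi.single i 1) := by
      simp only [hessMat, Matrix.of_apply, heq]
    rw [this, hprod.fderiv]
    simp only [ContinuousLinearMap.add_apply, ContinuousLinearMap.smul_apply,
      ContinuousLinearMap.comp_apply, ContinuousLinearMap.apply_apply, smul_eq_mul]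
    rw [← hessH i j]
    simp only [gradVec]
    ring
  -- expand LIσ for B
  have hLI : LIσ σ (fun z => Real.exp (-b * h z)) x
      = E * (b ^ 2 * Hσ σ h x - b * LIσ σ h x) := by
    have expand : ∀ y : (Fin n → ℝ) → ℝ, LIσ σ y x
        = (1/2) * ∑ i, ∑ j, (σ x * (σ x)ᵀ) i j * hessMat y x j i := by
      intro y
      simp [LIσ, Matrix.trace, Matrix.diag, Matrix.mul_apply, Finset.sum_mul]
    have hHσ : Hσ σ h x = (1/2) * ∑ i, ∑ j, (σ x * (σ x)ᵀ) i j
        * (gradVec h x j * gradVec h x i) := by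
      have lhs : ((gradVec h x) ᵥ* (σ x)) ⬝ᵥ ((gradVec h x) ᵥ* (σ x))
          = ∑ k, ∑ i, ∑ j, gradVec h x i * σ x i k * (gradVec h x j * σ x j k) := by
        simp only [dotProduct, Matrix.vecMul, dotProduct, Finset.sum_mul, Finset.mul_sum]
        refine Finset.sum_congr rfl fun k _ => ?_
        rw [Finset.sum_comm]
      have rhs : ∑ i, ∑ j, (σ x * (σ x)ᵀ) i j * (gradVec h x j * gradVec h x i)
          = ∑ i, ∑ j, ∑ k, gradVec h x i * σ x i k * (gradVec h x j * σ x j k) := by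
        apply Finset.sum_congr rfl; intro i _
        apply Finset.sum_congr rfl; intro j _
        simp only [Matrix.mul_apply, Matrix.transpose_apply, Finset.sum_mul]
        apply Finset.sum_congr rfl; intro k _
        ring
      rw [Hσ, lhs, rhs, Finset.sum_comm]
      congr 1
      apply Finset.sum_congr rfl; intro i _
      rw [Finset.sum_comm]
    rw [expand, expand, hHσ]
    have step : ∑ i, ∑ j, (σ x * (σ x)ᵀ) i j * hessMat (fun z => Real.exp (-b * h z)) x j i
        = ∑ i, ∑ j, (E * b ^ 2 * ((σ x * (σ x)ᵀ) i j * (gradVec h x j * gradVec h x i))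
            - E * b * ((σ x * (σ x)ᵀ) i j * hessMat h x j i)) := by
      apply Finset.sum_congr rfl; intro i _
      apply Finset.sum_congr rfl; intro j _
      rw [hessB]
      ring
    rw [step]
    simp only [Finset.sum_sub_distrib, ← Finset.mul_sum]
    ring
  have hDB : (fderiv ℝ (fun z => Real.exp (-b * h z)) x) (f x + (g x) *ᵥ (uo x + φ x))
      = (E * (-b)) * (fderiv ℝ h x) (f x + (g x) *ᵥ (uo x + φ x)) := by
    rw [(hB' x).fderiv]
    rfl
  rw [hDB, hLI]
  have key : 0 ≤ E * b * ((fderiv ℝ h x) (f x + (g x) *ᵥ (uo x + φ x))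
      + LIσ σ h x - b * Hσ σ h x) :=
    mul_nonneg (mul_pos hEpos hb).le (by linarith)
  nlinarith [key]
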